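/- Fix t* > 0 and a natural number n ≥ 1. There exists a constant C ≥ 0, independent of ω, such that for all real ω ≥ 1 and all t ∈ [0,t*]: ‖(iω)^{−n}·∫₀ᵗ e^{iωτ}·exp((t−τ)·L)·ad_L^n(α)·exp(τ·L)·u₀ dτ‖ ≤ C·ω^{−(n+1)}. -/

import Mathlib

/-- Iterated commutator: `adL L 0 x = x`, `adL L (k+1) x = L * adL L k x - adL L k x * L`. -/
def adL {A : Type*} [Ring A] (L : A) : ℕ → A → A
  | 0, x => x
  | k+1, x => L * adL L k x - adL L k x * L

section Aux

set_option linter.unusedSectionVars false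

variable {A : Type*} [NormedRing A] [NormedAlgebra ℂ A] [CompleteSpace A]

lemma myExp_cont (L : A) : Continuous (fun s : ℝ => NormedSpace.exp ((s:ℂ) • L)) :=
  (continuous_iff_continuousAt.2 fun x => (NormedSpace.exp_analytic (𝕂 := ℂ) x).continuousAt).comp (Complex.continuous_ofReal.smul continuous_const)

lemma myExp_hasDerivAt (L : A) (s : ℝ) :
    HasDerivAt (fun r : ℝ => NormedSpace.exp ((r:ℂ) • L))
      (NormedSpace.exp ((s:ℂ) • L) * L) s := by
  have h1 := hasDerivAt_exp_smul_const (𝕂 := ℂ) L (s : ℂ)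
  have h2 : HasDerivAt (fun r : ℝ => (r : ℂ)) 1 s := by
    simpa using (hasDerivAt_id s).ofReal_comp
  simpa [Function.comp_def] using h1.scomp (x := s) h2

lemma myExp_sub_hasDerivAt (L : A) (t τ : ℝ) :
    HasDerivAt (fun r : ℝ => NormedSpace.exp (((t - r : ℝ):ℂ) • L))
      (-(NormedSpace.exp (((t - τ : ℝ):ℂ) • L) * L)) τ := by
  have h1 := myExp_hasDerivAt L (t - τ)
  have h2 : HasDerivAt (fun r : ℝ => t - r) (-1) τ := by
    simpa using (hasDerivAt_id τ).const_sub t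
  have h3 := h1.scomp (x := τ) h2
  simp only [Function.comp_def, Complex.ofReal_sub] at h3 ⊢
  simpa using h3

lemma myExp_comm (L : A) (s : ℝ) :
    L * NormedSpace.exp ((s:ℂ) • L) = NormedSpace.exp ((s:ℂ) • L) * L :=
  (((Commute.refl L).smul_right ((s:ℂ))).exp_right).eq

lemma norm_mul4_le (x y z w : A) : ‖x*y*z*w‖ ≤ ‖x‖*‖y‖*‖z‖*‖w‖ :=
  calc ‖x*y*z*w‖ ≤ ‖x*y*z‖ * ‖w‖ := norm_mul_le _ _
    _ ≤ (‖x*y‖*‖z‖)*‖w‖ := by gcongr; exact norm_mul_le _ _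
    _ ≤ ((‖x‖*‖y‖)*‖z‖)*‖w‖ := by gcongr; exact norm_mul_le _ _

lemma hv_deriv (L a u₀ : A) (t τ : ℝ) :
    HasDerivAt (fun r : ℝ => NormedSpace.exp (((t - r:ℝ):ℂ) • L) * a *
        NormedSpace.exp ((r:ℂ) • L) * u₀)
      (-(NormedSpace.exp (((t - τ:ℝ):ℂ) • L) * (L*a - a*L) *
        NormedSpace.exp ((τ:ℂ) • L) * u₀)) τ := by
  have h3 := (((myExp_sub_hasDerivAt L t τ).mul_const a).mul (myExp_hasDerivAt L τ)).mul_const u₀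
  have hc : NormedSpace.exp ((τ:ℂ) • L) * L = L * NormedSpace.exp ((τ:ℂ) • L) :=
    (myExp_comm L τ).symm
  convert h3 using 1
  · rfl
  rw [hc]
  noncomm_ring

lemma hs_deriv (ω : ℝ) (τ : ℝ) :
    HasDerivAt (fun r : ℝ => Complex.exp (Complex.I * ω * r))
      (Complex.I * ω * Complex.exp (Complex.I * ω * τ)) τ := by
  have h1 : HasDerivAt (fun r : ℝ => Complex.I * ω * (r:ℂ)) (Complex.I * ω) τ := by
    simpa using (Complex.ofRealCLM.hasDerivAt (x := τ)).const_mul (Complex.I * (ω:ℂ))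
  have h2 := (Complex.hasDerivAt_exp (Complex.I * ω * τ)).scomp (x := τ) h1
  simpa [Function.comp_def, smul_eq_mul] using h2

end Aux

/-- Fix `t* > 0` and `n ≥ 1`. There exists a constant `C ≥ 0`, independent of
`ω`, such that for all real `ω ≥ 1` and all `t ∈ [0,t*]`:
`‖(iω)^{−n}·∫₀ᵗ e^{iωτ}·exp((t−τ)L)·ad_L^n(α)·exp(τL)·u₀ dτ‖ ≤ C·ω^{−(n+1)}`. -/
theorem stmt7 {A : Type*} [NormedRing A] [NormedAlgebra ℂ A] [CompleteSpace A]
    (L α u₀ : A) (T : ℝ) (hT : 0 < T) (n : ℕ) (hn : 1 ≤ n) :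
    ∃ C : ℝ, 0 ≤ C ∧ ∀ ω : ℝ, 1 ≤ ω → ∀ t ∈ Set.Icc (0:ℝ) T,
      ‖((Complex.I * ω) ^ n)⁻¹ •
        ∫ τ in (0:ℝ)..t, Complex.exp (Complex.I * ω * τ) •
          (NormedSpace.exp (((t - τ : ℝ) : ℂ) • L) * adL L n α *
            NormedSpace.exp ((τ : ℂ) • L) * u₀)‖
      ≤ C * (ω ^ (n + 1))⁻¹ := by
  obtain ⟨M, hM⟩ := (isCompact_Icc (a := (-T)) (b := T)).exists_bound_of_continuousOn
    (myExp_cont L).continuousOn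
  have hM0 : 0 ≤ M := le_trans (norm_nonneg _) (hM 0 ⟨by linarith, by linarith⟩)
  set a := adL L n α with ha
  set M1 := M * ‖a‖ * M * ‖u₀‖ with hM1
  set M2 := M * ‖L*a - a*L‖ * M * ‖u₀‖ with hM2
  have hM1nn : 0 ≤ M1 := by positivity
  have hM2nn : 0 ≤ M2 := by positivity
  refine ⟨2 * M1 + T * M2, by positivity, ?_⟩
  intro ω hω t ht
  obtain ⟨ht0, htT⟩ := ht
  have hω0 : (0:ℝ) < ω := lt_of_lt_of_le one_pos hω
  have hIω : (Complex.I * (ω:ℂ)) ≠ 0 :=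
    mul_ne_zero Complex.I_ne_zero (by exact_mod_cast hω0.ne')
  -- pointwise bounds
  have hEb : ∀ s : ℝ, s ∈ Set.Icc (0:ℝ) T → ‖NormedSpace.exp ((s:ℂ) • L)‖ ≤ M :=
    fun s hs => hM s ⟨by linarith [hs.1], hs.2⟩
  have hgen : ∀ (y : A), ∀ τ ∈ Set.Icc (0:ℝ) t,
      ‖NormedSpace.exp (((t - τ:ℝ):ℂ) • L) * y * NormedSpace.exp ((τ:ℂ) • L) * u₀‖
        ≤ M * ‖y‖ * M * ‖u₀‖ := by
    intro y τ hτ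
    refine (norm_mul4_le _ _ _ _).trans ?_
    have h1 := hEb (t - τ) ⟨by linarith [hτ.2], by linarith [hτ.1]⟩
    have h2 := hEb τ ⟨hτ.1, le_trans hτ.2 htT⟩
    exact mul_le_mul (mul_le_mul (mul_le_mul h1 le_rfl (norm_nonneg _) hM0) h2
      (norm_nonneg _) (mul_nonneg hM0 (norm_nonneg _)))
      le_rfl (norm_nonneg _)
      (mul_nonneg (mul_nonneg hM0 (norm_nonneg _)) hM0)
  -- scalar norms
  have habs : ∀ τ : ℝ, ‖Complex.exp (Complex.I * ω * τ)‖ = 1 := by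
    intro τ
    have h : (Complex.I * ω * τ : ℂ) = ((ω * τ : ℝ):ℂ) * Complex.I := by push_cast; ring
    rw [h, Complex.norm_exp_ofReal_mul_I]
  have hcn : ‖(Complex.I * (ω:ℂ))⁻¹‖ = ω⁻¹ := by
    rw [norm_inv, norm_mul, Complex.norm_I, one_mul, Complex.norm_real,
      Real.norm_eq_abs, abs_of_pos hω0]
  -- the key derivative
  have key : ∀ τ : ℝ, HasDerivAt
      (fun r : ℝ => (Complex.exp (Complex.I * ω * r) * (Complex.I * ω)⁻¹) •
        (NormedSpace.exp (((t - r:ℝ):ℂ) • L) * a * NormedSpace.exp ((r:ℂ) • L) * u₀))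
      (Complex.exp (Complex.I * ω * τ) •
        (NormedSpace.exp (((t - τ:ℝ):ℂ) • L) * a * NormedSpace.exp ((τ:ℂ) • L) * u₀)
       + (Complex.exp (Complex.I * ω * τ) * (Complex.I * ω)⁻¹) •
        (-(NormedSpace.exp (((t - τ:ℝ):ℂ) • L) * (L*a - a*L) *
            NormedSpace.exp ((τ:ℂ) • L) * u₀))) τ := by
    intro τ
    have hs := (hs_deriv ω τ).mul_const ((Complex.I * (ω:ℂ))⁻¹)
    have h4 := hs.smul (hv_deriv L a u₀ t τ)
    have he : Complex.I * ω * Complex.exp (Complex.I * ω * τ) * (Complex.I * ω)⁻¹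
        = Complex.exp (Complex.I * ω * τ) := by
      field_simp
      exact div_self (Complex.ofReal_ne_zero.mpr hω0.ne')
    rw [he, add_comm] at h4
    exact h4
  -- continuity / integrability
  have hEc := myExp_cont L
  have hvc : Continuous (fun r : ℝ =>
      NormedSpace.exp (((t - r:ℝ):ℂ) • L) * a * NormedSpace.exp ((r:ℂ) • L) * u₀) := by
    apply Continuous.mul _ continuous_const
    apply Continuous.mul _ hEc
    apply Continuous.mul _ continuous_const
    exact hEc.comp (continuous_const.sub continuous_id)
  have hwc : Continuous (fun r : ℝ =>
      NormedSpace.exp (((t - r:ℝ):ℂ) • L) * (L*a - a*L) *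
        NormedSpace.exp ((r:ℂ) • L) * u₀) := by
    apply Continuous.mul _ continuous_const
    apply Continuous.mul _ hEc
    apply Continuous.mul _ continuous_const
    exact hEc.comp (continuous_const.sub continuous_id)
  have hec : Continuous (fun r : ℝ => Complex.exp (Complex.I * ω * r)) :=
    Complex.continuous_exp.comp (continuous_const.mul Complex.continuous_ofReal)
  have hi1 : IntervalIntegrable (fun r : ℝ => Complex.exp (Complex.I * ω * r) •
      (NormedSpace.exp (((t - r:ℝ):ℂ) • L) * a * NormedSpace.exp ((r:ℂ) • L) * u₀))
      MeasureTheory.volume 0 t := (hec.smul hvc).intervalIntegrable 0 t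
  have hi2 : IntervalIntegrable (fun r : ℝ => (Complex.exp (Complex.I * ω * r) *
      (Complex.I * ω)⁻¹) • (-(NormedSpace.exp (((t - r:ℝ):ℂ) • L) * (L*a - a*L) *
        NormedSpace.exp ((r:ℂ) • L) * u₀)))
      MeasureTheory.volume 0 t := ((hec.mul continuous_const).smul hwc.neg).intervalIntegrable 0 t
  -- FTC
  have hftc := intervalIntegral.integral_eq_sub_of_hasDerivAt (fun τ _ => key τ) (hi1.add hi2)
  rw [intervalIntegral.integral_add hi1 hi2] at hftc
  have hInt := eq_sub_of_add_eq hftc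
  rw [norm_smul, hInt]
  -- norm computations
  have hc'n : ‖((Complex.I * (ω:ℂ)) ^ n)⁻¹‖ = (ω ^ n)⁻¹ := by
    rw [norm_inv, norm_pow, norm_mul, Complex.norm_I, one_mul, Complex.norm_real,
      Real.norm_eq_abs, abs_of_pos hω0]
  rw [hc'n]
  have hsc : ∀ τ : ℝ, ‖Complex.exp (Complex.I * ω * τ) * (Complex.I * (ω:ℂ))⁻¹‖ = ω⁻¹ := by
    intro τ
    rw [norm_mul, habs, one_mul, hcn]
  have hGt : ‖(Complex.exp (Complex.I * ω * t) * (Complex.I * ω)⁻¹) •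
      (NormedSpace.exp (((t - t:ℝ):ℂ) • L) * a * NormedSpace.exp ((t:ℂ) • L) * u₀)‖
      ≤ ω⁻¹ * M1 := by
    rw [norm_smul, hsc]
    exact mul_le_mul_of_nonneg_left (hgen a t ⟨ht0, le_refl t⟩) (by positivity)
  have hG0 : ‖(Complex.exp (Complex.I * ω * (0:ℝ)) * (Complex.I * ω)⁻¹) •
      (NormedSpace.exp ((((t - (0:ℝ) : ℝ)):ℂ) • L) * a * NormedSpace.exp (((0:ℝ):ℂ) • L) * u₀)‖
      ≤ ω⁻¹ * M1 := by
    rw [norm_smul, hsc]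
    exact mul_le_mul_of_nonneg_left (hgen a 0 ⟨le_refl 0, ht0⟩) (by positivity)
  have hI2 : ‖∫ τ in (0:ℝ)..t, (Complex.exp (Complex.I * ω * τ) *
      (Complex.I * ω)⁻¹) • (-(NormedSpace.exp (((t - τ:ℝ):ℂ) • L) * (L*a - a*L) *
        NormedSpace.exp ((τ:ℂ) • L) * u₀))‖ ≤ ω⁻¹ * M2 * T := by
    have hb : ∀ τ ∈ Set.uIoc (0:ℝ) t, ‖(Complex.exp (Complex.I * ω * τ) *
        (Complex.I * ω)⁻¹) • (-(NormedSpace.exp (((t - τ:ℝ):ℂ) • L) * (L*a - a*L) *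
          NormedSpace.exp ((τ:ℂ) • L) * u₀))‖ ≤ ω⁻¹ * M2 := by
      intro τ hτ
      rw [Set.uIoc_of_le ht0] at hτ
      rw [norm_smul, hsc, norm_neg]
      exact mul_le_mul_of_nonneg_left (hgen _ τ ⟨le_of_lt hτ.1, hτ.2⟩) (by positivity)
    refine le_trans (intervalIntegral.norm_integral_le_of_norm_le_const hb) ?_
    rw [sub_zero, abs_of_nonneg ht0]
    exact mul_le_mul_of_nonneg_left htT (mul_nonneg (by positivity) hM2nn)
  have hnorm : ‖(Complex.exp (Complex.I * ω * t) * (Complex.I * ω)⁻¹) •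
        (NormedSpace.exp (((t - t:ℝ):ℂ) • L) * a * NormedSpace.exp ((t:ℂ) • L) * u₀)
      - (Complex.exp (Complex.I * ω * (0:ℝ)) * (Complex.I * ω)⁻¹) •
        (NormedSpace.exp ((((t - (0:ℝ) : ℝ)):ℂ) • L) * a * NormedSpace.exp (((0:ℝ):ℂ) • L) * u₀)
      - ∫ τ in (0:ℝ)..t, (Complex.exp (Complex.I * ω * τ) *
          (Complex.I * ω)⁻¹) • (-(NormedSpace.exp (((t - τ:ℝ):ℂ) • L) * (L*a - a*L) *
            NormedSpace.exp ((τ:ℂ) • L) * u₀))‖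
      ≤ ω⁻¹ * (2 * M1 + T * M2) := by
    calc _ ≤ ‖(Complex.exp (Complex.I * ω * t) * (Complex.I * ω)⁻¹) •
        (NormedSpace.exp (((t - t:ℝ):ℂ) • L) * a * NormedSpace.exp ((t:ℂ) • L) * u₀)
      - (Complex.exp (Complex.I * ω * (0:ℝ)) * (Complex.I * ω)⁻¹) •
        (NormedSpace.exp ((((t - (0:ℝ) : ℝ)):ℂ) • L) * a * NormedSpace.exp (((0:ℝ):ℂ) • L) * u₀)‖
      + ‖∫ τ in (0:ℝ)..t, (Complex.exp (Complex.I * ω * τ) *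
          (Complex.I * ω)⁻¹) • (-(NormedSpace.exp (((t - τ:ℝ):ℂ) • L) * (L*a - a*L) *
            NormedSpace.exp ((τ:ℂ) • L) * u₀))‖ := norm_sub_le _ _
      _ ≤ (ω⁻¹ * M1 + ω⁻¹ * M1) + ω⁻¹ * M2 * T :=
          add_le_add (le_trans (norm_sub_le _ _) (add_le_add hGt hG0)) hI2
      _ = ω⁻¹ * (2 * M1 + T * M2) := by ring
  calc (ω ^ n)⁻¹ * ‖_‖ ≤ (ω ^ n)⁻¹ * (ω⁻¹ * (2 * M1 + T * M2)) :=
        mul_le_mul_of_nonneg_left hnorm (by positivity)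
    _ = (2 * M1 + T * M2) * (ω ^ (n + 1))⁻¹ := by
        rw [pow_succ, mul_inv]; ring
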